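/- Let G be a simple graph on n vertices and let v be a vertex of G. If the number of neighbors u of v satisfying deg(u) > √(2n) (as real numbers) is itself strictly greater than √(2n), then G contains a cycle of length 4. -/

import Mathlib

open scoped Classical

/-- A simple graph `G` contains a cycle of length `m`: there exist `m` pairwise
distinct vertices `v₀, …, v_{m-1}` such that `vᵢ` is adjacent to `v_{i+1}`,
indices taken modulo `m`. -/
def SimpleGraph.HasCycleOfLength {V : Type*} (G : SimpleGraph V) (m : ℕ) : Prop :=
  ∃ f : ZMod m → V, Function.Injective f ∧ ∀ i : ZMod m, G.Adj (f i) (f (i + 1))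

/-- If the number of neighbors of `v` of degree greater than `√(2n)` is itself
greater than `√(2n)`, then `G` contains a 4-cycle. -/
theorem four_cycle_of_many_heavy_neighbors {V : Type*} [Fintype V]
    (G : SimpleGraph V) [DecidableRel G.Adj] (v : V)
    (h : Real.sqrt (2 * Fintype.card V) <
      (((G.neighborFinset v).filter fun u =>
        Real.sqrt (2 * Fintype.card V) < (G.degree u : ℝ)).card : ℝ)) :
    G.HasCycleOfLength 4 := by
  classical
  set n := Fintype.card V with hn
  set r := Real.sqrt (2 * n) with hrdef
  set S := (G.neighborFinset v).filter fun u => r < (G.degree u : ℝ) with hSdef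
  have hn1 : 1 ≤ n := Fintype.card_pos_iff.mpr ⟨v⟩
  have hn1R : (1 : ℝ) ≤ (n : ℝ) := by exact_mod_cast hn1
  have hr0 : 0 ≤ r := Real.sqrt_nonneg _
  have hr2 : r ^ 2 = 2 * n := Real.sq_sqrt (by positivity)
  have hr1 : 1 < r := by nlinarith
  have hmem : ∀ u ∈ S, v ∈ G.neighborFinset u ∧ r < (G.degree u : ℝ) := by
    intro u hu
    rw [hSdef, Finset.mem_filter] at hu
    refine ⟨?_, hu.2⟩
    rw [SimpleGraph.mem_neighborFinset] at hu ⊢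
    exact hu.1.symm
  have key : ∃ u1 ∈ S, ∃ u2 ∈ S, u1 ≠ u2 ∧
      (((G.neighborFinset u1).erase v) ∩ ((G.neighborFinset u2).erase v)).Nonempty := by
    by_contra hcon
    push_neg at hcon
    have hdisj : ∀ u1 ∈ S, ∀ u2 ∈ S, u1 ≠ u2 →
        Disjoint ((G.neighborFinset u1).erase v) ((G.neighborFinset u2).erase v) := by
      intro u1 h1 u2 h2 hne
      rw [Finset.disjoint_iff_inter_eq_empty, ← Finset.not_nonempty_iff_eq_empty]
      exact Finset.not_nonempty_iff_eq_empty.mpr (hcon u1 h1 u2 h2 hne)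
    have hcard := Finset.card_biUnion hdisj
    have hsub : (S.biUnion fun u => (G.neighborFinset u).erase v) ⊆ Finset.univ.erase v := by
      intro x hx
      simp only [Finset.mem_biUnion] at hx
      obtain ⟨u, hu, hxu⟩ := hx
      exact Finset.mem_erase.mpr ⟨(Finset.mem_erase.mp hxu).1, Finset.mem_univ x⟩
    have h1 : ∑ u ∈ S, ((G.neighborFinset u).erase v).card ≤ n - 1 := by
      rw [← hcard]
      calc (S.biUnion fun u => (G.neighborFinset u).erase v).card
          ≤ (Finset.univ.erase v).card := Finset.card_le_card hsub
        _ = n - 1 := by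
            rw [Finset.card_erase_of_mem (Finset.mem_univ v), Finset.card_univ]
    have h2 : ∀ u ∈ S, ((G.neighborFinset u).erase v).card = G.degree u - 1 := by
      intro u hu
      rw [Finset.card_erase_of_mem (hmem u hu).1, SimpleGraph.card_neighborFinset_eq_degree]
    have hdeg1 : ∀ u ∈ S, 1 ≤ G.degree u := by
      intro u hu
      have := (hmem u hu).1
      rw [SimpleGraph.mem_neighborFinset] at this
      exact (G.degree_pos_iff_exists_adj u).mpr ⟨v, this⟩
    -- real bound
    have hsumR : ((∑ u ∈ S, ((G.neighborFinset u).erase v).card : ℕ) : ℝ)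
        = ∑ u ∈ S, ((G.degree u : ℝ) - 1) := by
      rw [Nat.cast_sum]
      refine Finset.sum_congr rfl fun u hu => ?_
      rw [h2 u hu, Nat.cast_sub (hdeg1 u hu), Nat.cast_one]
    have hlow : ∑ u ∈ S, ((G.degree u : ℝ) - 1) ≥ (S.card : ℝ) * (r - 1) := by
      have := Finset.card_nsmul_le_sum S (fun u => (G.degree u : ℝ) - 1) (r - 1)
        (fun u hu => by
          show r - 1 ≤ (G.degree u : ℝ) - 1
          linarith [(hmem u hu).2])
      simpa [nsmul_eq_mul] using this
    have hup : ((∑ u ∈ S, ((G.neighborFinset u).erase v).card : ℕ) : ℝ) ≤ (n : ℝ) - 1 := by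
      calc ((∑ u ∈ S, ((G.neighborFinset u).erase v).card : ℕ) : ℝ)
          ≤ ((n - 1 : ℕ) : ℝ) := by exact_mod_cast h1
        _ = (n : ℝ) - 1 := by rw [Nat.cast_sub hn1, Nat.cast_one]
    have hScard : r < (S.card : ℝ) := h
    have hprod : r * (r - 1) < (S.card : ℝ) * (r - 1) :=
      mul_lt_mul_of_pos_right hScard (by linarith)
    nlinarith [hlow, hup, hsumR, hprod, hr2, sq_nonneg (r - ((n : ℝ) + 1))]
  obtain ⟨u1, hu1, u2, hu2, hne, w, hw⟩ := key
  rw [Finset.mem_inter, Finset.mem_erase, Finset.mem_erase,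
    SimpleGraph.mem_neighborFinset, SimpleGraph.mem_neighborFinset] at hw
  obtain ⟨⟨hwv, hwu1⟩, _, hwu2⟩ := hw
  have hvu1 : G.Adj v u1 := by
    have := (Finset.mem_filter.mp hu1).1
    rwa [SimpleGraph.mem_neighborFinset] at this
  have hvu2 : G.Adj v u2 := by
    have := (Finset.mem_filter.mp hu2).1
    rwa [SimpleGraph.mem_neighborFinset] at this
  -- distinctness
  have d1 : v ≠ u1 := hvu1.ne
  have d2 : v ≠ u2 := hvu2.ne
  have d3 : v ≠ w := hwv.symm
  have d4 : u1 ≠ w := hwu1.ne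
  have d5 : u2 ≠ w := hwu2.ne
  refine ⟨fun i => ![v, u1, w, u2] i, ?_, ?_⟩
  · intro i j hij
    fin_cases i <;> fin_cases j <;>
      first
        | rfl
        | exact absurd hij (by
            first
              | exact d1 | exact d1.symm | exact d2 | exact d2.symm
              | exact d3 | exact d3.symm | exact d4 | exact d4.symm
              | exact d5 | exact d5.symm | exact hne | exact hne.symm)
  · intro i
    fin_cases i <;>
      first
        | exact hvu1
        | exact hwu1
        | exact hwu2.symm
        | exact hvu2.symm
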